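/- Every finite homocyclic abelian p-group is morphic. -/

import Mathlib

open Multiplicative in
noncomputable def tors (q : ℕ) (H : Type*) [Monoid H] : ℕ := Nat.card {x : H // x ^ q = 1}

section MorphicAux
open Multiplicative

/-- torsion count -/

lemma tors_congr {H K : Type*} [Monoid H] [Monoid K] (f : H ≃* K) (q : ℕ) :
    tors q H = tors q K := by
  refine Nat.card_congr (Equiv.subtypeEquiv f.toEquiv fun x => ?_)
  constructor
  · intro h; simp [MulEquiv.coe_toEquiv, ← map_pow, h]
  · intro h
    have : f (x ^ q) = f 1 := by simpa [map_pow] using h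
    exact f.injective this

lemma tors_pi {ι : Type*} [Fintype ι] (M : ι → Type*) [∀ i, Monoid (M i)] (q : ℕ) :
    tors q (Π i, M i) = ∏ i, tors q (M i) := by
  unfold tors
  rw [← Nat.card_pi]
  refine Nat.card_congr ?_
  refine ⟨fun x i => ⟨x.1 i, congrFun x.2 i⟩, fun y => ⟨fun i => (y i).1, by funext i; exact (y i).2⟩, fun x => rfl, fun y => rfl⟩

lemma zmod_smul_count (p : ℕ) (hp : p.Prime) (c k : ℕ) :
    Nat.card {a : ZMod (p ^ c) // p ^ k • a = 0} = p ^ min c k := by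
  have hpc : (p : ℕ) ^ c ≠ 0 := pow_ne_zero _ hp.pos.ne'
  haveI : NeZero (p ^ c) := ⟨hpc⟩
  have hz : (p : ℕ) ^ k • ((p ^ (c - min c k) : ℕ) : ZMod (p ^ c)) = 0 := by
    have : ((p ^ k * p ^ (c - min c k) : ℕ) : ZMod (p ^ c)) = 0 := by
      rw [ZMod.natCast_eq_zero_iff, ← pow_add]
      exact pow_dvd_pow p (by omega)
    rw [nsmul_eq_mul] at *
    push_cast at this ⊢
    exact this
  have hset : {a : ZMod (p ^ c) | p ^ k • a = 0} =
      (AddSubgroup.zmultiples ((p ^ (c - min c k) : ℕ) : ZMod (p ^ c)) : Set (ZMod (p ^ c))) := by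
    ext a
    simp only [Set.mem_setOf_eq, SetLike.mem_coe, AddSubgroup.mem_zmultiples_iff]
    constructor
    · intro h
      rcases le_or_gt c k with hck | hck
      · refine ⟨(a.val : ℤ), ?_⟩
        have hm : min c k = c := min_eq_left hck
        rw [hm, Nat.sub_self, pow_zero, Nat.cast_one, zsmul_eq_mul, mul_one]
        push_cast
        simp [ZMod.natCast_val, ZMod.cast_id]
      · have hmin : min c k = k := min_eq_right hck.le
        have hval : ((p ^ k * a.val : ℕ) : ZMod (p ^ c)) = 0 := by
          rw [Nat.cast_mul, ← nsmul_eq_mul]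
          simp only [ZMod.natCast_val, ZMod.cast_id]
          convert h using 2
        rw [ZMod.natCast_eq_zero_iff] at hval
        have hdvd : p ^ (c - k) ∣ a.val := by
          have h1 : p ^ k * p ^ (c - k) ∣ p ^ k * a.val := by
            rw [← pow_add, Nat.add_sub_cancel' hck.le]; exact hval
          exact (mul_dvd_mul_iff_left (pow_ne_zero k hp.pos.ne')).mp h1
        obtain ⟨t, ht⟩ := hdvd
        refine ⟨(t : ℤ), ?_⟩
        have ha : a = ((a.val : ℕ) : ZMod (p ^ c)) := by
          simp [ZMod.natCast_val, ZMod.cast_id]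
        rw [ha, ht, hmin, zsmul_eq_mul]
        push_cast
        ring
    · rintro ⟨z, rfl⟩
      rw [smul_comm, hz, smul_zero]
  calc Nat.card {a : ZMod (p ^ c) // p ^ k • a = 0}
      = Nat.card (AddSubgroup.zmultiples ((p ^ (c - min c k) : ℕ) : ZMod (p ^ c))) :=
        Nat.card_congr (Equiv.setCongr hset)
    _ = addOrderOf ((p ^ (c - min c k) : ℕ) : ZMod (p ^ c)) := Nat.card_zmultiples _
    _ = p ^ c / (p ^ c).gcd (p ^ (c - min c k)) := ZMod.addOrderOf_coe _ hpc
    _ = p ^ c / p ^ (c - min c k) := by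
        rw [Nat.gcd_eq_right (pow_dvd_pow p (Nat.sub_le c _))]
    _ = p ^ (c - (c - min c k)) := Nat.pow_div (Nat.sub_le c _) hp.pos
    _ = p ^ min c k := by congr 1; omega

lemma tors_mult_zmod (p : ℕ) (hp : p.Prime) (c k : ℕ) :
    tors (p ^ k) (Multiplicative (ZMod (p ^ c))) = p ^ min c k := by
  rw [← zmod_smul_count p hp c k]
  refine Nat.card_congr (Equiv.subtypeEquiv Multiplicative.toAdd fun x => ?_)
  constructor
  · intro h
    have := congrArg Multiplicative.toAdd h
    simpa using this
  · intro h
    apply Multiplicative.toAdd.injective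
    simpa using h

-- surjectivity: if p^(e-k) • a = 0 then a is p^k-divisible (k ≤ e)
lemma zmod_exists_smul (p : ℕ) (hp : p.Prime) (e k : ℕ) (hk : k ≤ e)
    (a : ZMod (p ^ e)) (h : p ^ (e - k) • a = 0) : ∃ b : ZMod (p ^ e), p ^ k • b = a := by
  have hpe : (p : ℕ) ^ e ≠ 0 := pow_ne_zero _ hp.pos.ne'
  haveI : NeZero (p ^ e) := ⟨hpe⟩
  have hval : ((p ^ (e - k) * a.val : ℕ) : ZMod (p ^ e)) = 0 := by
    rw [Nat.cast_mul, ← nsmul_eq_mul]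
    simp only [ZMod.natCast_val, ZMod.cast_id]
    convert h using 2
  rw [ZMod.natCast_eq_zero_iff] at hval
  have hdvd : p ^ k ∣ a.val := by
    have h1 : p ^ (e - k) * p ^ k ∣ p ^ (e - k) * a.val := by
      rw [← pow_add, Nat.sub_add_cancel hk]; exact hval
    exact (mul_dvd_mul_iff_left (pow_ne_zero _ hp.pos.ne')).mp h1
  obtain ⟨t, ht⟩ := hdvd
  refine ⟨(t : ℕ), ?_⟩
  rw [nsmul_eq_mul]
  have ha : a = ((a.val : ℕ) : ZMod (p ^ e)) := by simp [ZMod.natCast_val, ZMod.cast_id]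
  rw [ha, ht]
  push_cast
  ring

lemma tors_eq_card_ker (H : Type*) [CommGroup H] (q : ℕ) :
    tors q H = Nat.card (MonoidHom.ker (powMonoidHom q : H →* H)) :=
  Nat.card_congr (Equiv.subtypeEquivRight fun x => by
    simp [MonoidHom.mem_ker, powMonoidHom_apply])

lemma tors_subgroup_eq_card_inf (H : Type*) [CommGroup H] (N : Subgroup H) (q : ℕ) :
    tors q N = Nat.card (N ⊓ MonoidHom.ker (powMonoidHom q : H →* H) : Subgroup H) := by
  apply Nat.card_congr
  refine ⟨fun x => ⟨x.1.1, x.1.2, ?_⟩, fun y => ⟨⟨y.1, y.2.1⟩, ?_⟩, fun x => rfl, fun y => rfl⟩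
  · have := congrArg Subtype.val x.2
    simpa [MonoidHom.mem_ker, powMonoidHom_apply] using this
  · have : (y : H) ^ q = 1 := by
      have := y.2.2
      simpa [MonoidHom.mem_ker, powMonoidHom_apply] using this
    exact Subtype.ext (by simpa using this)

lemma exp_pi_zmod (p e n : ℕ) (x : Fin n → Multiplicative (ZMod (p ^ e))) : x ^ (p ^ e) = 1 := by
  funext i
  apply Multiplicative.toAdd.injective
  have : (p ^ e : ℕ) • (Multiplicative.toAdd (x i)) = 0 := by
    rw [nsmul_eq_mul, ZMod.natCast_self, zero_mul]
  simpa using this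

lemma tors_pi_zmod (p : ℕ) (hp : p.Prime) (e n k : ℕ) (hk : k ≤ e) :
    tors (p ^ k) (Fin n → Multiplicative (ZMod (p ^ e))) = p ^ (k * n) := by
  rw [tors_pi, Finset.prod_congr rfl (fun i _ => tors_mult_zmod p hp e k), Finset.prod_const,
    Finset.card_univ, Fintype.card_fin, min_eq_right hk, ← pow_mul]

theorem key_count (p e n : ℕ) (hp : p.Prime) (k : ℕ) (hk : k ≤ e)
    (N : Subgroup (Fin n → Multiplicative (ZMod (p ^ e)))) :
    tors (p ^ k) ((Fin n → Multiplicative (ZMod (p ^ e))) ⧸ N) * Nat.card N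
      = p ^ (k * n) * tors (p ^ (e - k)) N := by
  set A := Fin n → Multiplicative (ZMod (p ^ e)) with hA
  let φ : A →* A := powMonoidHom (p ^ k)
  let S : Subgroup A := N.comap φ
  have hNS : N ≤ S := fun x hx => by
    simp only [S, Subgroup.mem_comap, φ, powMonoidHom_apply]
    exact N.pow_mem hx _
  -- first computation : card S = tors (p^k) (A/N) * card N
  have hcard1 : Nat.card S = tors (p ^ k) (A ⧸ N) * Nat.card N := by
    let ψ : S →* A ⧸ N := (QuotientGroup.mk' N).comp S.subtype
    have hker : ψ.ker = N.subgroupOf S := by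
      ext x
      simp only [ψ, MonoidHom.mem_ker, MonoidHom.comp_apply, Subgroup.coe_subtype,
        QuotientGroup.mk'_apply, QuotientGroup.eq_one_iff, Subgroup.mem_subgroupOf]
    have hrange : ψ.range = MonoidHom.ker (powMonoidHom (p ^ k) : A ⧸ N →* A ⧸ N) := by
      ext y
      simp only [MonoidHom.mem_range, MonoidHom.mem_ker, powMonoidHom_apply]
      constructor
      · rintro ⟨x, rfl⟩
        have hx : (x : A) ^ (p ^ k) ∈ N := x.2
        show ((QuotientGroup.mk' N) (x : A)) ^ (p ^ k) = 1
        rw [← map_pow, QuotientGroup.mk'_apply, QuotientGroup.eq_one_iff]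
        exact hx
      · intro hy
        obtain ⟨x, rfl⟩ := QuotientGroup.mk'_surjective N y
        have hx : x ^ (p ^ k) ∈ N := by
          rw [← QuotientGroup.eq_one_iff (G := A) (N := N), ← QuotientGroup.mk'_apply, map_pow]
          exact hy
        exact ⟨⟨x, by simpa [S, Subgroup.mem_comap, φ, powMonoidHom_apply] using hx⟩, rfl⟩
    calc Nat.card S = Nat.card (S ⧸ ψ.ker) * Nat.card ψ.ker :=
          Subgroup.card_eq_card_quotient_mul_card_subgroup ψ.ker
      _ = tors (p ^ k) (A ⧸ N) * Nat.card N := by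
          congr 1
          · rw [Nat.card_congr (QuotientGroup.quotientKerEquivRange ψ).toEquiv, hrange,
              ← tors_eq_card_ker]
          · rw [hker, Nat.card_congr (Subgroup.subgroupOfEquivOfLe hNS).toEquiv]
  -- second computation : card S = p^(k*n) * tors (p^(e-k)) N
  have hcard2 : Nat.card S = p ^ (k * n) * tors (p ^ (e - k)) N := by
    let ψ₂ : S →* A := φ.comp S.subtype
    have hkerφ : (MonoidHom.ker φ) ≤ S := fun x hx => by
      simp only [S, Subgroup.mem_comap]
      rw [MonoidHom.mem_ker] at hx
      rw [hx]
      exact N.one_mem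
    have hker₂ : ψ₂.ker = (MonoidHom.ker φ).subgroupOf S := by
      ext x
      simp only [ψ₂, MonoidHom.mem_ker, MonoidHom.comp_apply, Subgroup.coe_subtype,
        Subgroup.mem_subgroupOf]
    have hrange₂ : ψ₂.range = N ⊓ MonoidHom.ker (powMonoidHom (p ^ (e - k)) : A →* A) := by
      ext y
      simp only [MonoidHom.mem_range, Subgroup.mem_inf, MonoidHom.mem_ker, powMonoidHom_apply]
      constructor
      · rintro ⟨x, rfl⟩
        have hx : (x : A) ^ (p ^ k) ∈ N := x.2
        refine ⟨hx, ?_⟩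
        show ((x : A) ^ (p ^ k)) ^ (p ^ (e - k)) = 1
        rw [← pow_mul, ← pow_add, Nat.add_sub_cancel' hk]
        exact exp_pi_zmod p e n _
      · rintro ⟨hyN, hy⟩
        have h' : ∀ i, p ^ (e - k) • (Multiplicative.toAdd (y i)) = 0 := by
          intro i
          have := congrFun hy i
          have : (y i) ^ (p ^ (e - k)) = 1 := this
          have := congrArg Multiplicative.toAdd this
          simpa using this
        choose b hb using fun i => zmod_exists_smul p hp e k hk _ (h' i)
        have hxy : (fun i => Multiplicative.ofAdd (b i) : A) ^ (p ^ k) = y := by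
          funext i
          apply Multiplicative.toAdd.injective
          simp only [Pi.pow_apply, toAdd_pow, toAdd_ofAdd]
          exact hb i
        refine ⟨⟨_, ?_⟩, hxy⟩
        have hmem : (fun i => Multiplicative.ofAdd (b i) : A) ^ (p ^ k) ∈ N := by
          rw [hxy]; exact hyN
        exact hmem
    calc Nat.card S = Nat.card (S ⧸ ψ₂.ker) * Nat.card ψ₂.ker :=
          Subgroup.card_eq_card_quotient_mul_card_subgroup ψ₂.ker
      _ = p ^ (k * n) * tors (p ^ (e - k)) N := by
          rw [mul_comm]
          congr 1
          · rw [hker₂, Nat.card_congr (Subgroup.subgroupOfEquivOfLe hkerφ).toEquiv,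
              ← tors_eq_card_ker, tors_pi_zmod p hp e n k hk]
          · rw [Nat.card_congr (QuotientGroup.quotientKerEquivRange ψ₂).toEquiv, hrange₂,
              ← tors_subgroup_eq_card_inf]
  rw [← hcard1, hcard2]

/-- structure: finite commutative group of exponent dividing p^e -/
lemma struct_lemma (p e : ℕ) (hp : p.Prime) (H : Type*) [CommGroup H] [Finite H]
    (hexp : ∀ x : H, x ^ (p ^ e) = 1) :
    ∃ (m : ℕ) (c : Fin m → ℕ), (∀ i, 1 ≤ c i ∧ c i ≤ e) ∧
      Nonempty (H ≃* ((i : Fin m) → Multiplicative (ZMod (p ^ c i)))) := by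
  obtain ⟨ι, hι, d, hd, ⟨f⟩⟩ := CommGroup.equiv_prod_multiplicative_zmod_of_finite H
  haveI := hι
  haveI : DecidableEq ι := Classical.decEq ι
  -- every d i divides p ^ e
  have hdvd : ∀ i, d i ∣ p ^ e := by
    intro i
    haveI : NeZero (d i) := ⟨by have := hd i; omega⟩
    have hy : ∀ y : ((i : ι) → Multiplicative (ZMod (d i))), y ^ (p ^ e) = 1 := by
      intro y
      have := hexp (f.symm y)
      have := congrArg f this
      simpa [map_pow] using this
    have h1 : (Pi.mulSingle i (Multiplicative.ofAdd (1 : ZMod (d i)))) ^ (p ^ e) = 1 := hy _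
    have h2 : (Multiplicative.ofAdd (1 : ZMod (d i))) ^ (p ^ e) = 1 := by
      have := congrFun h1 i
      simpa using this
    have h3 : (p ^ e) • (1 : ZMod (d i)) = 0 := by
      have := congrArg Multiplicative.toAdd h2
      simpa using this
    have := addOrderOf_dvd_of_nsmul_eq_zero h3
    rwa [ZMod.addOrderOf_one] at this
  have hc : ∀ i, ∃ c : ℕ, 1 ≤ c ∧ c ≤ e ∧ d i = p ^ c := by
    intro i
    obtain ⟨c, hce, hdc⟩ := (Nat.dvd_prime_pow hp).mp (hdvd i)
    refine ⟨c, ?_, hce, hdc⟩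
    rcases Nat.eq_zero_or_pos c with rfl | h
    · exfalso; have := hd i; rw [hdc, pow_zero] at this; omega
    · exact h
  choose c hc1 hc2 hc3 using hc
  let eι := (Fintype.equivFin ι).symm
  refine ⟨Fintype.card ι, c ∘ eι, fun j => ⟨hc1 _, hc2 _⟩, ?_⟩
  -- iso: Π i : ι, Mult (ZMod (d i)) ≃* Π j : Fin m, Mult (ZMod (p ^ c (eι j)))
  have g1 : ((i : ι) → Multiplicative (ZMod (d i))) ≃*
      ((i : ι) → Multiplicative (ZMod (p ^ c i))) :=
    MulEquiv.piCongrRight fun i =>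
      AddEquiv.toMultiplicative (ZMod.ringEquivCongr (hc3 i)).toAddEquiv
  have g2 : ((i : ι) → Multiplicative (ZMod (p ^ c i))) ≃*
      ((j : Fin (Fintype.card ι)) → Multiplicative (ZMod (p ^ c (eι j)))) :=
    { Equiv.piCongrLeft' (fun i => Multiplicative (ZMod (p ^ c i))) (Fintype.equivFin ι) with
      map_mul' := fun x y => rfl }
  exact ⟨(f.trans g1).trans g2⟩

-- P1 : sum of min increments
lemma sum_min_succ (s : Multiset ℕ) (k : ℕ) :
    (s.map (fun x => min x (k + 1))).sum
      = (s.map (fun x => min x k)).sum + s.countP (fun x => k + 1 ≤ x) := by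
  induction s using Multiset.induction_on with
  | empty => simp
  | cons a s ih =>
    simp only [Multiset.map_cons, Multiset.sum_cons, Multiset.countP_cons, ih]
    by_cases h : k + 1 ≤ a
    · simp [h]; omega
    · simp [h]; omega

-- P2 : countP decomposition
lemma countP_le_decomp (s : Multiset ℕ) (k : ℕ) :
    s.countP (fun x => k ≤ x) = s.count k + s.countP (fun x => k + 1 ≤ x) := by
  induction s using Multiset.induction_on with
  | empty => simp
  | cons a s ih =>
    simp only [Multiset.countP_cons, Multiset.count_cons, ih]
    by_cases h1 : k ≤ a <;> by_cases h2 : k + 1 ≤ a <;> by_cases h3 : k = a <;>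
      simp [h1, h2, h3] <;> omega

/-- permutation of factors iso -/
def permPiEquiv {m : ℕ} (M : ℕ → Type*) [∀ a, Monoid (M a)] (c : Fin m → ℕ)
    (σ : Equiv.Perm (Fin m)) : ((i : Fin m) → M (c i)) ≃* ((i : Fin m) → M (c (σ i))) :=
  { Equiv.piCongrLeft' (fun i => M (c i)) σ.symm with map_mul' := fun x y => rfl }

lemma multiset_eq_of_profile {m m' e : ℕ} (c : Fin m → ℕ) (d : Fin m' → ℕ)
    (hc : ∀ i, 1 ≤ c i ∧ c i ≤ e) (hd : ∀ j, 1 ≤ d j ∧ d j ≤ e)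
    (h : ∀ k, k ≤ e → ∑ i, min (c i) k = ∑ j, min (d j) k) :
    (List.ofFn c : Multiset ℕ) = (List.ofFn d : Multiset ℕ) := by
  set s : Multiset ℕ := (List.ofFn c : Multiset ℕ) with hs
  set t : Multiset ℕ := (List.ofFn d : Multiset ℕ) with ht
  have hmem_s : ∀ x ∈ s, 1 ≤ x ∧ x ≤ e := by
    intro x hx
    rw [hs, Multiset.mem_coe, List.mem_ofFn] at hx
    obtain ⟨i, rfl⟩ := hx
    exact hc i
  have hmem_t : ∀ x ∈ t, 1 ≤ x ∧ x ≤ e := by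
    intro x hx
    rw [ht, Multiset.mem_coe, List.mem_ofFn] at hx
    obtain ⟨j, rfl⟩ := hx
    exact hd j
  have hsum : ∀ k, k ≤ e → (s.map (fun x => min x k)).sum = (t.map (fun x => min x k)).sum := by
    intro k hk
    rw [hs, ht, Multiset.map_coe, Multiset.map_coe, List.map_ofFn, List.map_ofFn,
      Multiset.sum_coe, Multiset.sum_coe, List.sum_ofFn, List.sum_ofFn]
    exact h k hk
  -- countP equal for all thresholds ≥ 1
  have hcountP : ∀ k, 1 ≤ k → s.countP (fun x => k ≤ x) = t.countP (fun x => k ≤ x) := by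
    intro k hk
    rcases le_or_gt k e with hke | hke
    · obtain ⟨k, rfl⟩ := Nat.exists_eq_add_of_le hk
      have h1 := sum_min_succ s k
      have h2 := sum_min_succ t k
      have e1 := hsum k (by omega)
      have e2 := hsum (k + 1) (by omega)
      rw [Nat.add_comm 1 k] at *
      omega
    · rw [Multiset.countP_eq_zero.mpr, Multiset.countP_eq_zero.mpr]
      · intro x hx; have := hmem_t x hx; omega
      · intro x hx; have := hmem_s x hx; omega
  refine Multiset.ext.mpr fun a => ?_
  rcases Nat.eq_zero_or_pos a with rfl | ha
  · rw [Multiset.count_eq_zero.mpr, Multiset.count_eq_zero.mpr]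
    · intro hx; have := hmem_t 0 hx; omega
    · intro hx; have := hmem_s 0 hx; omega
  · have q1 := countP_le_decomp s a
    have q2 := countP_le_decomp t a
    have r1 := hcountP a ha
    have r2 := hcountP (a + 1) (by omega)
    omega

lemma pi_equiv_of_multiset_eq (p : ℕ) {m m' : ℕ} (c : Fin m → ℕ) (d : Fin m' → ℕ)
    (h : (List.ofFn c : Multiset ℕ) = (List.ofFn d : Multiset ℕ)) :
    Nonempty (((i : Fin m) → Multiplicative (ZMod (p ^ c i)))
      ≃* ((j : Fin m') → Multiplicative (ZMod (p ^ d j)))) := by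
  have hm : m = m' := by
    have := congrArg Multiset.card h
    simpa using this
  subst hm
  have hperm : List.Perm (List.ofFn c) (List.ofFn d) := Multiset.coe_eq_coe.mp h
  set σc := Tuple.sort c
  set σd := Tuple.sort d
  have hcs : Monotone (c ∘ σc) := Tuple.monotone_sort c
  have hds : Monotone (d ∘ σd) := Tuple.monotone_sort d
  have hperm2 : List.Perm (List.ofFn (c ∘ σc)) (List.ofFn (d ∘ σd)) :=
    ((σc.ofFn_comp_perm c).trans hperm).trans (σd.ofFn_comp_perm d).symm
  have heq : c ∘ σc = d ∘ σd :=
    List.ofFn_injective (List.Perm.eq_of_sortedLE hcs.sortedLE_ofFn hds.sortedLE_ofFn hperm2)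
  let M : ℕ → Type _ := fun a => Multiplicative (ZMod (p ^ a))
  have e1 := permPiEquiv M c σc
  have e2 := permPiEquiv M d σd
  have e3 : ((i : Fin m) → M (c (σc i))) ≃* ((i : Fin m) → M (d (σd i))) :=
    MulEquiv.piCongrRight fun i =>
      AddEquiv.toMultiplicative (ZMod.ringEquivCongr
        (congrArg (p ^ ·) (congrFun heq i))).toAddEquiv
  exact ⟨(e1.trans e3).trans e2.symm⟩

lemma tors_prod_pow (p : ℕ) (hp : p.Prime) {m : ℕ} (c : Fin m → ℕ) (k : ℕ) :
    tors (p ^ k) ((i : Fin m) → Multiplicative (ZMod (p ^ c i)))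
      = p ^ (∑ i, min (c i) k) := by
  rw [tors_pi, Finset.prod_congr rfl (fun i _ => tors_mult_zmod p hp (c i) k),
    Finset.prod_pow_eq_pow_sum]

section MainA

variable (p e n : ℕ)

local notation "A" => Fin n → Multiplicative (ZMod (p ^ e))

lemma card_A (hp : p.Prime) : Nat.card A = p ^ (e * n) := by
  haveI : NeZero (p ^ e) := ⟨pow_ne_zero _ hp.pos.ne'⟩
  rw [Nat.card_pi]
  have h1 : ∀ i : Fin n, Nat.card (Multiplicative (ZMod (p ^ e))) = p ^ e := fun i => by
    rw [Nat.card_congr (Multiplicative.toAdd (α := ZMod (p ^ e))), Nat.card_zmod]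
  rw [Finset.prod_congr rfl (fun i _ => h1 i), Finset.prod_const, Finset.card_univ,
    Fintype.card_fin, ← pow_mul]

lemma exp_quot (hp : p.Prime) (N : Subgroup A) (x : (A) ⧸ N) : x ^ (p ^ e) = 1 := by
  induction x using QuotientGroup.induction_on with
  | H a =>
    show ((QuotientGroup.mk' N) a) ^ (p ^ e) = 1
    rw [← map_pow, exp_pi_zmod, map_one]

lemma exp_sub (hp : p.Prime) (N : Subgroup A) (x : N) : x ^ (p ^ e) = 1 := by
  apply Subtype.ext
  have : ((x : A)) ^ (p ^ e) = 1 := exp_pi_zmod p e n _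
  simpa using this

lemma main_A (hp : p.Prime) (N₁ N₂ : Subgroup A) (f : ((A) ⧸ N₁) ≃* N₂) :
    Nonempty (((A) ⧸ N₂) ≃* N₁) := by
  haveI : NeZero (p ^ e) := ⟨pow_ne_zero _ hp.pos.ne'⟩
  -- cardinalities
  have hposP : ∀ j : ℕ, 0 < p ^ j := fun j => pow_pos hp.pos j
  have hlag : Nat.card A = Nat.card ((A) ⧸ N₁) * Nat.card N₁ :=
    Subgroup.card_eq_card_quotient_mul_card_subgroup N₁
  have hcardN₂ : Nat.card ((A) ⧸ N₁) = Nat.card N₂ := Nat.card_congr f.toEquiv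
  have hba : Nat.card N₂ * Nat.card N₁ = p ^ (e * n) := by
    rw [← hcardN₂, ← hlag, card_A p e n hp]
  -- tors equality
  have htors : ∀ k, k ≤ e → tors (p ^ k) ((A) ⧸ N₂) = tors (p ^ k) N₁ := by
    intro k hk
    have k1 := key_count p e n hp k hk N₂
    have k2 := key_count p e n hp (e - k) (Nat.sub_le e k) N₁
    rw [Nat.sub_sub_self hk] at k2
    have ht : tors (p ^ (e - k)) N₂ = tors (p ^ (e - k)) ((A) ⧸ N₁) :=
      (tors_congr f _).symm
    -- X * b = P1 * t ; t * a = P2 * Y ; b * a = P1 * P2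
    set X := tors (p ^ k) ((A) ⧸ N₂)
    set Y := tors (p ^ k) (N₁ : Subgroup A)
    set t := tors (p ^ (e - k)) ((A) ⧸ N₁)
    set a := Nat.card N₁
    set b := Nat.card N₂
    rw [ht] at k1
    have hP : p ^ (k * n) * p ^ ((e - k) * n) = p ^ (e * n) := by
      rw [← pow_add]; congr 1
      have : k * n + (e - k) * n = (k + (e - k)) * n := by ring
      rw [this, Nat.add_sub_cancel' hk]
    have hXY : X * (p ^ (e * n)) = Y * (p ^ (e * n)) := by
      calc X * (p ^ (e * n)) = X * (b * a) := by rw [hba]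
        _ = (X * b) * a := by ring
        _ = (p ^ (k * n) * t) * a := by rw [k1]
        _ = p ^ (k * n) * (t * a) := by ring
        _ = p ^ (k * n) * (p ^ ((e - k) * n) * Y) := by rw [k2]
        _ = Y * (p ^ (k * n) * p ^ ((e - k) * n)) := by ring
        _ = Y * (p ^ (e * n)) := by rw [hP]
    exact Nat.eq_of_mul_eq_mul_right (hposP _) hXY
  -- structure
  obtain ⟨m₁, c₁, hc₁, ⟨g₁⟩⟩ := struct_lemma p e hp N₁ (exp_sub p e n hp N₁)
  obtain ⟨m₂, d₂, hd₂, ⟨g₂⟩⟩ := struct_lemma p e hp ((A) ⧸ N₂) (exp_quot p e n hp N₂)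
  have hprof : ∀ k, k ≤ e → ∑ j, min (d₂ j) k = ∑ i, min (c₁ i) k := by
    intro k hk
    have h1 : tors (p ^ k) ((A) ⧸ N₂) = p ^ (∑ j, min (d₂ j) k) := by
      rw [tors_congr g₂, tors_prod_pow p hp]
    have h2 : tors (p ^ k) N₁ = p ^ (∑ i, min (c₁ i) k) := by
      rw [tors_congr g₁, tors_prod_pow p hp]
    have := htors k hk
    rw [h1, h2] at this
    exact Nat.pow_right_injective hp.two_le this
  obtain ⟨w⟩ := pi_equiv_of_multiset_eq p d₂ c₁
    (multiset_eq_of_profile d₂ c₁ hd₂ hc₁ hprof)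
  exact ⟨(g₂.trans w).trans g₁.symm⟩

end MainA

end MorphicAux

/-- A group is morphic if for every pair of normal subgroups `N₁, N₂`,
`G/N₁ ≅ N₂` holds if and only if `G/N₂ ≅ N₁`. -/
def IsMorphic (G : Type*) [Group G] : Prop :=
  ∀ N₁ N₂ : Subgroup G, ∀ h₁ : N₁.Normal, ∀ h₂ : N₂.Normal,
    (Nonempty ((G ⧸ N₁) ≃* N₂) ↔ Nonempty ((G ⧸ N₂) ≃* N₁))

/-- Every finite homocyclic abelian `p`-group is morphic. -/
theorem homocyclic_isMorphic (p : ℕ) (hp : p.Prime) (G : Type*) [Group G] [Finite G]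
    (n e : ℕ)
    (hG : Nonempty (G ≃* (Fin n → Multiplicative (ZMod (p ^ e))))) :
    IsMorphic G := by
  obtain ⟨f⟩ := hG
  have transfer : ∀ M₁ M₂ : Subgroup G, ∀ h₁ : M₁.Normal, ∀ h₂ : M₂.Normal,
      Nonempty ((G ⧸ M₁) ≃* M₂) → Nonempty ((G ⧸ M₂) ≃* M₁) := by
    intro M₁ M₂ h₁ h₂ ⟨h⟩
    haveI := h₁; haveI := h₂
    set K₁ := M₁.map f.toMonoidHom with hK₁
    set K₂ := M₂.map f.toMonoidHom with hK₂
    haveI : K₁.Normal := Subgroup.normal_of_comm K₁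
    haveI : K₂.Normal := Subgroup.normal_of_comm K₂
    have qe₁ := QuotientGroup.congr M₁ K₁ f rfl
    have qe₂ := QuotientGroup.congr M₂ K₂ f rfl
    have se₁ : M₁ ≃* K₁ := f.subgroupMap M₁
    have se₂ : M₂ ≃* K₂ := f.subgroupMap M₂
    obtain ⟨w⟩ := main_A p e n hp K₁ K₂ ((qe₁.symm.trans h).trans se₂)
    exact ⟨(qe₂.trans w).trans se₁.symm⟩
  intro N₁ N₂ h₁ h₂
  exact ⟨fun h => transfer N₁ N₂ h₁ h₂ h, fun h => transfer N₂ N₁ h₂ h₁ h⟩
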